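/- Fix r ≥ 2 and define μ(t) = (∑_{a=0}^{r-1} a·e^{-at}) / (∑_{a=0}^{r-1} e^{-at}). Then for all t ∈ ℝ, μ'(t)/μ(t) ≥ -(r-1) + 1/(∑_{a=0}^{r-1} e^{at}), and in particular μ'(t)/μ(t) > -(r-1). -/

import Mathlib

open Finset

noncomputable def meanFun (r : ℕ) (t : ℝ) : ℝ :=
  (∑ a ∈ Finset.range r, (a : ℝ) * Real.exp (-(a : ℝ) * t)) /
    (∑ a ∈ Finset.range r, Real.exp (-(a : ℝ) * t))

theorem meanFun_logderiv_lower_bound (r : ℕ) (hr : 2 ≤ r) (t : ℝ) :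
    -((r : ℝ) - 1) + 1 / (∑ a ∈ Finset.range r, Real.exp ((a : ℝ) * t)) ≤
        deriv (meanFun r) t / meanFun r t ∧
      -((r : ℝ) - 1) < deriv (meanFun r) t / meanFun r t := by
  have hr1 : (1:ℝ) ≤ (r:ℝ) - 1 := by
    have : (2:ℝ) ≤ (r:ℝ) := by exact_mod_cast hr
    linarith
  set S : ℝ := ∑ a ∈ Finset.range r, Real.exp (-(a : ℝ) * t) with hS
  set N : ℝ := ∑ a ∈ Finset.range r, (a:ℝ) * Real.exp (-(a : ℝ) * t) with hN
  set Q : ℝ := ∑ a ∈ Finset.range r, (a:ℝ)^2 * Real.exp (-(a : ℝ) * t) with hQ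
  set T : ℝ := ∑ a ∈ Finset.range r, Real.exp ((a : ℝ) * t) with hT
  have h0 : 0 ∈ Finset.range r := Finset.mem_range.mpr (by omega)
  have hSpos : 0 < S := Finset.sum_pos (fun a _ => Real.exp_pos _) ⟨0, h0⟩
  have hTpos : 0 < T := Finset.sum_pos (fun a _ => Real.exp_pos _) ⟨0, h0⟩
  have hNpos : 0 < N := by
    refine Finset.sum_pos' (fun a _ => by positivity) ⟨1, Finset.mem_range.mpr (by omega), ?_⟩
    have : (0:ℝ) < Real.exp (-(1:ℝ) * t) := Real.exp_pos _
    simpa using this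
  -- derivatives
  have hDS : HasDerivAt (fun x => ∑ a ∈ Finset.range r, Real.exp (-(a : ℝ) * x)) (-N) t := by
    have : HasDerivAt (fun x => ∑ a ∈ Finset.range r, Real.exp (-(a : ℝ) * x))
        (∑ a ∈ Finset.range r, Real.exp (-(a:ℝ) * t) * (-(a:ℝ) * 1)) t := by
      apply HasDerivAt.fun_sum
      intro a _
      exact ((hasDerivAt_id t).const_mul (-(a:ℝ))).exp
    convert this using 1
    rw [hN, ← Finset.sum_neg_distrib]
    exact Finset.sum_congr rfl fun a _ => by ring
  have hDN : HasDerivAt (fun x => ∑ a ∈ Finset.range r, (a:ℝ) * Real.exp (-(a : ℝ) * x)) (-Q) t := by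
    have : HasDerivAt (fun x => ∑ a ∈ Finset.range r, (a:ℝ) * Real.exp (-(a : ℝ) * x))
        (∑ a ∈ Finset.range r, (a:ℝ) * (Real.exp (-(a:ℝ) * t) * (-(a:ℝ) * 1))) t := by
      apply HasDerivAt.fun_sum
      intro a _
      exact (((hasDerivAt_id t).const_mul (-(a:ℝ))).exp).const_mul ((a:ℝ))
    convert this using 1
    rw [hQ, ← Finset.sum_neg_distrib]
    exact Finset.sum_congr rfl fun a _ => by ring
  have hderiv : deriv (meanFun r) t = (N^2 - Q*S)/S^2 := by
    have h := (hDN.div hDS hSpos.ne').deriv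
    have hfun : ((fun x => (∑ a ∈ Finset.range r, (a:ℝ) * Real.exp (-(a : ℝ) * x))) /
        (fun x => ∑ a ∈ Finset.range r, Real.exp (-(a : ℝ) * x))) = meanFun r := rfl
    rw [hfun] at h
    rw [h]; ring
  have hmean : meanFun r t = N / S := rfl
  have hlog : deriv (meanFun r) t / meanFun r t = N/S - Q/N := by
    rw [hderiv, hmean]
    field_simp
  -- reindexing: T = S * exp((r-1) t)
  have hTS : T = S * Real.exp (((r:ℝ)-1) * t) := by
    rw [hT, ← Finset.sum_range_reflect (fun a => Real.exp ((a:ℝ) * t)) r, hS, Finset.sum_mul]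
    refine Finset.sum_congr rfl fun a ha => ?_
    have hlt : a < r := Finset.mem_range.mp ha
    rw [← Real.exp_add]
    congr 1
    have hc : ((r - 1 - a : ℕ) : ℝ) = (r:ℝ) - 1 - (a:ℝ) := by
      rw [Nat.cast_sub (by omega), Nat.cast_sub (by omega)]
      push_cast; ring
    rw [hc]; ring
  -- N lower bound
  have hNlb : Real.exp (-((r:ℝ)-1) * t) ≤ N := by
    have hm : r - 1 ∈ Finset.range r := Finset.mem_range.mpr (by omega)
    have h := Finset.single_le_sum (f := fun a : ℕ => (a:ℝ) * Real.exp (-(a:ℝ) * t))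
      (fun i _ => mul_nonneg i.cast_nonneg (Real.exp_pos _).le) hm
    have hc : ((r - 1 : ℕ) : ℝ) = (r:ℝ) - 1 := by
      rw [Nat.cast_sub (by omega)]; norm_num
    rw [hc] at h
    nlinarith [Real.exp_pos (-((r:ℝ)-1) * t)]
  -- Q ≤ (r-1) N
  have hQle : Q ≤ ((r:ℝ)-1) * N := by
    rw [hQ, hN, Finset.mul_sum]
    apply Finset.sum_le_sum
    intro a ha
    have hlt : a < r := Finset.mem_range.mp ha
    have hle : (a:ℝ) ≤ (r:ℝ) - 1 := by
      have : (a:ℝ) + 1 ≤ (r:ℝ) := by exact_mod_cast hlt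
      linarith
    nlinarith [mul_nonneg (mul_nonneg (sub_nonneg.mpr hle) (Nat.cast_nonneg (α := ℝ) a)) (Real.exp_pos (-(a:ℝ) * t)).le]
  -- 1/T ≤ N/S
  have h1T : 1/T ≤ N/S := by
    have heq : (1:ℝ)/T = Real.exp (-((r:ℝ)-1) * t) / S := by
      rw [hTS, neg_mul, Real.exp_neg]
      field_simp
    rw [heq]
    gcongr
  have hQN : Q/N ≤ (r:ℝ) - 1 := (div_le_iff₀ hNpos).mpr (by linarith)
  constructor
  · rw [hlog]; linarith
  · rw [hlog]
    have : 0 < 1/T := by positivity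
    linarith
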